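/- Let (G, L, c, r, e_r) be a rooted WRAP instance and α a nonnegative integer. Let 𝒳' be a finite set of pairwise disjoint festoons whose festoon intervals {I_X : X ∈ 𝒳'} form a laminar family and satisfy r ∉ I_X for every X ∈ 𝒳' with I_X ≠ V. If every festoon X ∈ 𝒳' is tangled with at most α festoons in {Z ∈ 𝒳' \ {X} : X ≼ Z}, then the link set ⋃_{X ∈ 𝒳'} X is 4(α + 1)-thin. -/

import Mathlib

/-!
Common definitions for the Weighted Ring Augmentation Problem (WRAP).

A rooted WRAP instance `(G, L, c, r, e_r)` has a ring graph `G` whose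
vertices we identify with `Fin n`, numbered `r = 0, 1, …, n-1` in the order
in which they appear along the path `(V, E \ {e_r})` starting at the root
`r = 0`.  Vertex `i` is to the left of `j` iff `i < j`.
-/

/-- An undirected link: an unordered pair of distinct vertices of the ring,
recorded via its left endpoint `lo` and its right endpoint `hi`. -/
structure Link (n : ℕ) where
  lo : Fin n
  hi : Fin n
  lo_lt_hi : lo < hi

instance {n : ℕ} : DecidableEq (Link n) := fun a b =>
  decidable_of_iff (a.lo = b.lo ∧ a.hi = b.hi) (by cases a; cases b; simp)

/-- A directed link: an ordered pair of distinct vertices. -/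
structure DLink (n : ℕ) where
  tail : Fin n
  head : Fin n
  ne : tail ≠ head

instance {n : ℕ} : DecidableEq (DLink n) := fun a b =>
  decidable_of_iff (a.tail = b.tail ∧ a.head = b.head) (by cases a; cases b; simp)

variable {n : ℕ}

/-- The underlying undirected link of a directed link. -/
def DLink.toLink (d : DLink n) : Link n :=
  ⟨min d.tail d.head, max d.tail d.head, min_lt_max.mpr d.ne⟩

/-- `ℓ` is incident to `v`. -/
def Link.Incident (ℓ : Link n) (v : Fin n) : Prop := ℓ.lo = v ∨ ℓ.hi = v

/-- The 2-cuts `C_G` of the ring: the nonempty intervals of consecutive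
vertices along the path `(V, E \ {e_r})` that do not contain the root `0`. -/
def IsCut [NeZero n] (C : Finset (Fin n)) : Prop :=
  ∃ a b : Fin n, 0 < a ∧ a ≤ b ∧ C = Finset.Icc a b

/-- `ℓ` has exactly one endpoint in `C`. -/
def crossesCut (ℓ : Link n) (C : Finset (Fin n)) : Prop :=
  (ℓ.lo ∈ C ∧ ℓ.hi ∉ C) ∨ (ℓ.lo ∉ C ∧ ℓ.hi ∈ C)

instance (ℓ : Link n) (C : Finset (Fin n)) : Decidable (crossesCut ℓ C) := by
  unfold crossesCut; infer_instance

/-- `δ_K(C)`: the links of `K` with exactly one endpoint in `C`. -/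
def cutLinks (K : Finset (Link n)) (C : Finset (Fin n)) : Finset (Link n) :=
  K.filter (fun ℓ => crossesCut ℓ C)

/-- An (undirected) WRAP solution: every 2-cut is covered by some link. -/
def IsSolution [NeZero n] (S : Finset (Link n)) : Prop :=
  ∀ C : Finset (Fin n), IsCut C → (cutLinks S C).Nonempty

/-- A directed link covers a 2-cut if it enters it. -/
def DCovers (d : DLink n) (C : Finset (Fin n)) : Prop := d.tail ∉ C ∧ d.head ∈ C

/-- A directed WRAP solution: every 2-cut is entered by some directed link. -/
def IsDirSolution [NeZero n] (F : Finset (DLink n)) : Prop :=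
  ∀ C : Finset (Fin n), IsCut C → ∃ d ∈ F, DCovers d C

/-- `d'` is a shortening of `d`: same head, and the tail of `d'` lies on the
unique path between the endpoints of `d` in `(V, E \ {e_r})`. -/
def IsShortening (d' d : DLink n) : Prop :=
  d'.head = d.head ∧ min d.tail d.head ≤ d'.tail ∧ d'.tail ≤ max d.tail d.head

/-- A non-shortenable directed WRAP solution: deleting any link, or replacing
any link by a strict shortening of it, destroys feasibility. -/
def NonShortenable [NeZero n] (F : Finset (DLink n)) : Prop :=
  IsDirSolution F ∧
    (∀ d ∈ F, ¬ IsDirSolution (F.erase d)) ∧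
    (∀ d ∈ F, ∀ d' : DLink n, IsShortening d' d → d' ≠ d →
      ¬ IsDirSolution (insert d' (F.erase d)))

/-- `d` is a shadow of the undirected link `ℓ`: a shortening of one of the two
orientations of `ℓ`. -/
def IsShadow (d : DLink n) (ℓ : Link n) : Prop :=
  (d.head = ℓ.lo ∨ d.head = ℓ.hi) ∧ ℓ.lo ≤ d.tail ∧ d.tail ≤ ℓ.hi

/-- `u` is a descendant of `v` in `(V, F)` (every vertex is a descendant of
itself). -/
def Descend (F : Finset (DLink n)) (v u : Fin n) : Prop :=
  Relation.ReflTransGen (fun a b => ∃ d ∈ F, d.tail = a ∧ d.head = b) v u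

/-- `u` is `v`-good: not a descendant of `v` in `(V, F)`. -/
def VGood (F : Finset (DLink n)) (v u : Fin n) : Prop := ¬ Descend F v u

/-- `w` is the least common ancestor of the vertex set `U` in `(V, F)`. -/
def IsLCA (F : Finset (DLink n)) (w : Fin n) (U : Set (Fin n)) : Prop :=
  (∀ u ∈ U, Descend F w u) ∧ ∀ x : Fin n, (∀ u ∈ U, Descend F x u) → Descend F x w

/-- `d = (u,v)` is responsible for the 2-cut `C`: it covers `C` and no
directed link of `F` on the `r`–`u` path in the arborescence `(V, F)`
(i.e. no link of `F` whose head is an ancestor of `u`) covers `C`. -/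
def Responsible [NeZero n] (F : Finset (DLink n)) (d : DLink n)
    (C : Finset (Fin n)) : Prop :=
  IsCut C ∧ DCovers d C ∧
    ∀ d' ∈ F, Descend F d'.head d.tail → ¬ DCovers d' C

/-- `Drop_F(K)`: directed links of `F` all of whose responsible cuts
are covered by `K`. -/
def Drop [NeZero n] (F : Finset (DLink n)) (K : Finset (Link n)) : Set (DLink n) :=
  {d | d ∈ F ∧ ∀ C : Finset (Fin n), Responsible F d C → (cutLinks K C).Nonempty}

/-- Two links are crossing: their endpoints interleave along the ring. -/
def Crossing (ℓ f : Link n) : Prop :=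
  (ℓ.lo < f.lo ∧ f.lo < ℓ.hi ∧ ℓ.hi < f.hi) ∨
  (f.lo < ℓ.lo ∧ ℓ.lo < f.hi ∧ f.hi < ℓ.hi)

/-- Two links intersect: they share an endpoint or cross. -/
def Intersects (ℓ f : Link n) : Prop :=
  (ℓ.lo = f.lo ∨ ℓ.lo = f.hi ∨ ℓ.hi = f.lo ∨ ℓ.hi = f.hi) ∨ Crossing ℓ f

/-- The vertex `u` is connected to the vertex `w` in the link intersection
graph `H[K]`: there is a path in `H[K]` from a link incident to `u` to a link
incident to `w`. -/
def ConnVert (K : Finset (Link n)) (u w : Fin n) : Prop :=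
  ∃ ℓ ∈ K, ∃ f ∈ K, ℓ.Incident u ∧ f.Incident w ∧
    Relation.ReflTransGen (fun a b => a ∈ K ∧ b ∈ K ∧ Intersects a b) ℓ f

/-- The link intersection graph `H[S]` is connected. -/
def ConnLinkSet (S : Finset (Link n)) : Prop :=
  ∀ ℓ ∈ S, ∀ f ∈ S,
    Relation.ReflTransGen (fun a b => a ∈ S ∧ b ∈ S ∧ Intersects a b) ℓ f

/-- `V(S)`: the vertices incident to a link of `S`. -/
def linkVerts (S : Finset (Link n)) : Set (Fin n) := {v | ∃ ℓ ∈ S, ℓ.Incident v}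

/-- A festoon order: the links (listed as `f 0, f 1, …`) form a path in the
link intersection graph visited in this order, with both left endpoints and
right endpoints strictly increasing. -/
def IsFestoonSeq {p : ℕ} (f : Fin p → Link n) : Prop :=
  (∀ i j : Fin p, i < j → (f i).lo < (f j).lo ∧ (f i).hi < (f j).hi) ∧
  (∀ i j : Fin p, (i : ℕ) + 1 = (j : ℕ) → Intersects (f i) (f j)) ∧
  (∀ i j : Fin p, (i : ℕ) + 1 < (j : ℕ) → ¬ Intersects (f i) (f j))

/-- A festoon: a nonempty link set admitting a festoon order. -/
def IsFestoon (X : Finset (Link n)) : Prop :=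
  ∃ p : ℕ, 0 < p ∧ ∃ f : Fin p → Link n,
    IsFestoonSeq f ∧ X = Finset.image f Finset.univ

/-- The festoon interval `I_X`: the interval from the leftmost endpoint of a
link of `X` to the rightmost endpoint of a link of `X`. -/
def festoonIval (X : Finset (Link n)) : Set (Fin n) :=
  {w | (∃ ℓ ∈ X, ℓ.lo ≤ w) ∧ ∃ ℓ ∈ X, w ≤ ℓ.hi}

/-- Two festoons are tangled: some link of one intersects some link of the
other. -/
def Tangled (X Y : Finset (Link n)) : Prop :=
  ∃ ℓ ∈ X, ∃ f ∈ Y, Intersects ℓ f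

/-- A laminar family of vertex sets: any two members are nested or disjoint. -/
def Laminar (𝓛 : Set (Finset (Fin n))) : Prop :=
  ∀ A ∈ 𝓛, ∀ B ∈ 𝓛, A ⊆ B ∨ B ⊆ A ∨ Disjoint A B

/-- An inclusion-wise maximal laminar subfamily of `C_G`. -/
def MaxLaminarCuts [NeZero n] (𝓛 : Set (Finset (Fin n))) : Prop :=
  (∀ C ∈ 𝓛, IsCut C) ∧ Laminar 𝓛 ∧
    ∀ C : Finset (Fin n), IsCut C → C ∉ 𝓛 → ¬ Laminar (insert C 𝓛)

/-- An `α`-thin link set. -/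
def IsThin [NeZero n] (α : ℕ) (K : Finset (Link n)) : Prop :=
  ∃ 𝓛 : Set (Finset (Fin n)), MaxLaminarCuts 𝓛 ∧ ∀ C ∈ 𝓛, (cutLinks K C).card ≤ α

/-- The set `𝒳` of festoons connects `v` to a `v`-good vertex. -/
def ConnectsToGood (F : Finset (DLink n)) (v : Fin n)
    (𝒳 : Finset (Finset (Link n))) : Prop :=
  ∃ w : Fin n, VGood F v w ∧ ConnVert (𝒳.biUnion id) v w

/-- The undirected graph obtained from a set of directed links by
disregarding orientations. -/
def undirGraph (F : Finset (DLink n)) : SimpleGraph (Fin n) where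
  Adj a b := ∃ d ∈ F, (d.tail = a ∧ d.head = b) ∨ (d.tail = b ∧ d.head = a)
  symm := by
    constructor
    rintro a b ⟨d, hd, h⟩
    exact ⟨d, hd, h.symm⟩
  loopless := by
    constructor
    rintro a ⟨d, hd, h⟩
    rcases h with ⟨h1, h2⟩ | ⟨h1, h2⟩ <;> exact d.ne (h1.trans h2.symm)

/-- A directed link going to the left along the ring. -/
def LeftGoing (d : DLink n) : Prop := d.head < d.tail

/-- A directed link going to the right along the ring. -/
def RightGoing (d : DLink n) : Prop := d.tail < d.head

/-! ### Auxiliary lemmas for `few_tangled_imply_thin` -/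

section FewTangledAux

lemma Intersects.symm' {a b : Link n} (h : Intersects a b) : Intersects b a := by
  unfold Intersects Crossing at *; tauto

lemma festoon_mem_image {p : ℕ} (f : Fin p → Link n) (i : Fin p) :
    f i ∈ Finset.image f Finset.univ := Finset.mem_image.2 ⟨i, Finset.mem_univ i, rfl⟩

lemma festoonSeq_lo_lt {p : ℕ} {f : Fin p → Link n} (hf : IsFestoonSeq f)
    {i j : Fin p} (h : i < j) : (f i).lo < (f j).lo := (hf.1 i j h).1

lemma festoonSeq_hi_lt {p : ℕ} {f : Fin p → Link n} (hf : IsFestoonSeq f)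
    {i j : Fin p} (h : i < j) : (f i).hi < (f j).hi := (hf.1 i j h).2

lemma festoonSeq_overlap {p : ℕ} {f : Fin p → Link n} (hf : IsFestoonSeq f)
    {i j : Fin p} (hij : (i : ℕ) + 1 = (j : ℕ)) : (f j).lo ≤ (f i).hi := by
  have hlt : i < j := by rw [Fin.lt_def]; omega
  have h1 := (hf.1 i j hlt).1
  have h2 := (hf.1 i j hlt).2
  have hlohi_j := (f j).lo_lt_hi
  rcases hf.2.1 i j hij with (h | h | h | h) | (⟨ha, hb, hc⟩ | ⟨ha, hb, hc⟩)
  · exact absurd h (ne_of_lt h1)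
  · exact absurd h (ne_of_lt (lt_trans h1 hlohi_j))
  · exact le_of_eq h.symm
  · exact absurd h (ne_of_lt h2)
  · exact le_of_lt hb
  · exact absurd ha (not_lt.mpr h1.le)

lemma festoon_cover {p : ℕ} {f : Fin p → Link n} (hf : IsFestoonSeq f)
    {v : Fin n} (hv : v ∈ festoonIval (Finset.image f Finset.univ)) :
    ∃ i, (f i).lo ≤ v ∧ v ≤ (f i).hi := by
  classical
  obtain ⟨⟨ℓ0, hℓ0, hlo0⟩, ⟨ℓ1, hℓ1, hhi1⟩⟩ := hv
  obtain ⟨i0, -, rfl⟩ := Finset.mem_image.1 hℓ0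
  obtain ⟨i1, -, rfl⟩ := Finset.mem_image.1 hℓ1
  set S : Finset (Fin p) := Finset.univ.filter (fun i => (f i).lo ≤ v) with hS
  have hSne : S.Nonempty := ⟨i0, by simp [hS, hlo0]⟩
  set i := S.max' hSne with hi
  have hiS : i ∈ S := S.max'_mem hSne
  have hilo : (f i).lo ≤ v := (Finset.mem_filter.1 hiS).2
  by_cases hih : v ≤ (f i).hi
  · exact ⟨i, hilo, hih⟩
  push_neg at hih
  have hii1 : i < i1 := by
    by_contra hc
    push_neg at hc
    rcases eq_or_lt_of_le hc with hc | hc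
    · rw [← hc] at hih; exact absurd hhi1 (not_le.mpr hih)
    · exact absurd (le_trans hhi1 (festoonSeq_hi_lt hf hc).le) (not_le.mpr hih)
  have hj : (i : ℕ) + 1 < p := by
    have h1 := hii1; rw [Fin.lt_def] at h1; have := i1.isLt; omega
  set j : Fin p := ⟨(i : ℕ) + 1, hj⟩ with hjdef
  have hjS : j ∈ S := by
    have hov : (f j).lo ≤ (f i).hi := festoonSeq_overlap hf (by simp [hjdef])
    exact Finset.mem_filter.2 ⟨Finset.mem_univ _, le_of_lt (lt_of_le_of_lt hov hih)⟩
  have hle := S.le_max' j hjS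
  rw [← hi] at hle
  rw [Fin.le_def] at hle
  simp [hjdef] at hle

lemma festoon_tangle {X Z : Finset (Link n)} (hX : IsFestoon X) (hZ : IsFestoon Z)
    (hsub : festoonIval X ⊆ festoonIval Z) {ζ : Link n} (hζ : ζ ∈ Z)
    {v : Fin n} (hv : ζ.lo = v ∨ ζ.hi = v) (hvX : v ∈ festoonIval X) :
    Tangled X Z := by
  classical
  obtain ⟨p, hp, f, hf, rfl⟩ := hX
  obtain ⟨q, hq, g, hg, rfl⟩ := hZ
  obtain ⟨i, hLv, hvH⟩ := festoon_cover hf hvX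
  set ℓ := f i with hℓdef
  have hℓX : ℓ ∈ Finset.image f Finset.univ := festoon_mem_image f i
  by_cases hint : Intersects ℓ ζ
  · exact ⟨ℓ, hℓX, ζ, hζ, hint⟩
  have hno : ¬(ℓ.lo = ζ.lo ∨ ℓ.lo = ζ.hi ∨ ℓ.hi = ζ.lo ∨ ℓ.hi = ζ.hi) :=
    fun h => hint (Or.inl h)
  push_neg at hno
  obtain ⟨hn1, hn2, hn3, hn4⟩ := hno
  have hnc : ¬Crossing ℓ ζ := fun h => hint (Or.inr h)
  have hζlh := ζ.lo_lt_hi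
  have hkey : ℓ.lo < ζ.lo ∧ ζ.hi < ℓ.hi := by
    rcases hv with hv | hv
    · subst hv
      have h1 : ℓ.lo < ζ.lo := lt_of_le_of_ne hLv hn1
      have h2 : ζ.lo < ℓ.hi := lt_of_le_of_ne hvH (fun h => hn3 h.symm)
      have h3 : ζ.hi < ℓ.hi := by
        by_contra hcon
        push_neg at hcon
        rcases eq_or_lt_of_le hcon with hcc | hcc
        · exact hn4 hcc
        · exact hnc (Or.inl ⟨h1, h2, hcc⟩)
      exact ⟨h1, h3⟩
    · subst hv
      have h2 : ζ.hi < ℓ.hi := lt_of_le_of_ne hvH (fun h => hn4 h.symm)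
      have h1 : ℓ.lo < ζ.hi := lt_of_le_of_ne hLv hn2
      have h3 : ℓ.lo < ζ.lo := by
        by_contra hcon
        push_neg at hcon
        rcases eq_or_lt_of_le hcon with hcc | hcc
        · exact hn1 hcc.symm
        · exact hnc (Or.inr ⟨hcc, h1, h2⟩)
      exact ⟨h3, h2⟩
  obtain ⟨hL, hH⟩ := hkey
  have hHZ : ℓ.hi ∈ festoonIval (Finset.image g Finset.univ) :=
    hsub ⟨⟨ℓ, hℓX, le_of_lt ℓ.lo_lt_hi⟩, ⟨ℓ, hℓX, le_refl _⟩⟩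
  obtain ⟨-, ⟨ℓm, hℓm, hm⟩⟩ := hHZ
  obtain ⟨m, -, rfl⟩ := Finset.mem_image.1 hℓm
  obtain ⟨j, -, hgj⟩ := Finset.mem_image.1 hζ
  have hjm : j < m := by
    by_contra hc
    push_neg at hc
    rcases eq_or_lt_of_le hc with hc | hc
    · rw [hc, hgj] at hm; exact absurd hm (not_le.mpr hH)
    · have := festoonSeq_hi_lt hg hc
      rw [hgj] at this
      exact absurd hm (not_le.mpr (lt_trans this hH))
  set S := Finset.univ.filter (fun k : Fin q => j < k ∧ ℓ.hi ≤ (g k).hi) with hS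
  have hSne : S.Nonempty := ⟨m, by simp [hS]; exact ⟨hjm, hm⟩⟩
  set k := S.min' hSne with hk
  have hkS := S.min'_mem hSne
  obtain ⟨hjk, hHk⟩ := (Finset.mem_filter.1 hkS).2
  have hk1 : 1 ≤ (k : ℕ) := by
    have := hjk; rw [Fin.lt_def] at this; omega
  have hk'lt : (k : ℕ) - 1 < q := by have := k.isLt; omega
  set k' : Fin q := ⟨(k : ℕ) - 1, hk'lt⟩ with hk'def
  have hk'succ : (k' : ℕ) + 1 = (k : ℕ) := by simp [hk'def]; omega
  have hjk' : (j : ℕ) ≤ (k' : ℕ) := by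
    have := hjk; rw [Fin.lt_def] at this; simp [hk'def]; omega
  have hk'H : (g k').hi < ℓ.hi := by
    rcases eq_or_lt_of_le hjk' with hc | hc
    · have hjk'' : k' = j := Fin.ext hc.symm
      rw [hjk'', hgj]; exact hH
    · by_contra hcon
      push_neg at hcon
      have hk'S : k' ∈ S := by
        refine Finset.mem_filter.2 ⟨Finset.mem_univ _, ?_, hcon⟩
        rw [Fin.lt_def]; exact hc
      have hle := S.min'_le k' hk'S
      rw [← hk, Fin.le_def] at hle
      omega
  have hlok : (g k).lo ≤ (g k').hi := festoonSeq_overlap hg hk'succ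
  have hlojk : (g j).lo < (g k).lo := festoonSeq_lo_lt hg hjk
  rw [hgj] at hlojk
  have h1 : ℓ.lo < (g k).lo := lt_trans hL hlojk
  have h2 : (g k).lo < ℓ.hi := lt_of_le_of_lt hlok hk'H
  rcases eq_or_lt_of_le hHk with hc | hc
  · exact ⟨ℓ, hℓX, g k, festoon_mem_image g k, Or.inl (Or.inr (Or.inr (Or.inr hc)))⟩
  · exact ⟨ℓ, hℓX, g k, festoon_mem_image g k, Or.inr (Or.inl ⟨h1, h2, hc⟩)⟩

lemma festoon_two {p : ℕ} {g : Fin p → Link n} (hg : IsFestoonSeq g)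
    (P : Fin p → Prop) [DecidablePred P]
    (hP : ∀ i j : Fin p, i < j → P i → P j → (g j).lo < (g i).hi) :
    (Finset.univ.filter P).card ≤ 2 := by
  classical
  set S := Finset.univ.filter P with hS
  rcases S.eq_empty_or_nonempty with h | h
  · simp [h]
  set m := S.min' h with hm
  have hmS : m ∈ S := S.min'_mem h
  have key : ∀ i ∈ S, (i : ℕ) = (m : ℕ) ∨ (i : ℕ) = (m : ℕ) + 1 := by
    intro i hiS
    have hmi : m ≤ i := S.min'_le i hiS
    by_contra hcon
    push_neg at hcon
    have hlt : (m : ℕ) + 1 < (i : ℕ) := by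
      rw [Fin.le_def] at hmi; omega
    have hni := hg.2.2 m i hlt
    have hmi' : m < i := by rw [Fin.lt_def]; omega
    exact hni (Or.inr (Or.inl ⟨festoonSeq_lo_lt hg hmi',
      hP m i hmi' (Finset.mem_filter.1 hmS).2 (Finset.mem_filter.1 hiS).2,
      festoonSeq_hi_lt hg hmi'⟩))
  have hsub : S ⊆ insert m (Finset.univ.filter (fun i : Fin p => (i : ℕ) = (m : ℕ) + 1)) := by
    intro i hiS
    rcases key i hiS with hc | hc
    · exact Finset.mem_insert.2 (Or.inl (Fin.ext hc))
    · exact Finset.mem_insert.2 (Or.inr (by simp [hc]))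
  refine le_trans (Finset.card_le_card hsub) (le_trans (Finset.card_insert_le _ _) ?_)
  have h1 : (Finset.univ.filter (fun i : Fin p => (i : ℕ) = (m : ℕ) + 1)).card ≤ 1 :=
    Finset.card_le_one.2 (fun a ha b hb => Fin.ext (by simp at ha hb; omega))
  omega

lemma festoon_four {Z : Finset (Link n)} (hZ : IsFestoon Z) (a b : Fin n) :
    (cutLinks Z (Finset.Icc a b)).card ≤ 4 := by
  classical
  obtain ⟨q, hq, g, hg, rfl⟩ := hZ
  have himg : cutLinks (Finset.image g Finset.univ) (Finset.Icc a b) =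
      Finset.image g (Finset.univ.filter (fun i => crossesCut (g i) (Finset.Icc a b))) := by
    unfold cutLinks
    rw [Finset.filter_image]
  rw [himg]
  refine le_trans Finset.card_image_le ?_
  have hsplit : (Finset.univ.filter (fun i => crossesCut (g i) (Finset.Icc a b))) ⊆
      (Finset.univ.filter
        (fun i => (g i).lo ∈ Finset.Icc a b ∧ (g i).hi ∉ Finset.Icc a b)) ∪
      (Finset.univ.filter
        (fun i => (g i).lo ∉ Finset.Icc a b ∧ (g i).hi ∈ Finset.Icc a b)) := by
    intro i hi
    rcases (Finset.mem_filter.1 hi).2 with h | h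
    · exact Finset.mem_union_left _ (Finset.mem_filter.2 ⟨Finset.mem_univ _, h⟩)
    · exact Finset.mem_union_right _ (Finset.mem_filter.2 ⟨Finset.mem_univ _, h⟩)
  refine le_trans (Finset.card_le_card hsplit) (le_trans (Finset.card_union_le _ _) ?_)
  have h1 : (Finset.univ.filter
      (fun i => (g i).lo ∈ Finset.Icc a b ∧ (g i).hi ∉ Finset.Icc a b)).card ≤ 2 := by
    refine festoon_two hg _ (fun i j hij hPi hPj => ?_)
    obtain ⟨hPi1, hPi2⟩ := hPi
    obtain ⟨hPj1, hPj2⟩ := hPj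
    rw [Finset.mem_Icc] at hPi1 hPj1
    have hbi : b < (g i).hi := by
      by_contra hcon
      push_neg at hcon
      exact hPi2 (Finset.mem_Icc.2 ⟨le_of_lt (lt_of_le_of_lt hPi1.1 (g i).lo_lt_hi), hcon⟩)
    exact lt_of_le_of_lt hPj1.2 hbi
  have h2 : (Finset.univ.filter
      (fun i => (g i).lo ∉ Finset.Icc a b ∧ (g i).hi ∈ Finset.Icc a b)).card ≤ 2 := by
    refine festoon_two hg _ (fun i j hij hPi hPj => ?_)
    obtain ⟨hPi1, hPi2⟩ := hPi
    obtain ⟨hPj1, hPj2⟩ := hPj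
    rw [Finset.mem_Icc] at hPi2 hPj2
    have hja : (g j).lo < a := by
      by_contra hcon
      push_neg at hcon
      exact hPj1 (Finset.mem_Icc.2 ⟨hcon, le_of_lt (lt_of_lt_of_le (g j).lo_lt_hi hPj2.2)⟩)
    exact lt_of_lt_of_le hja hPi2.1
  omega

lemma festoon_nonempty {X : Finset (Link n)} (hX : IsFestoon X) : X.Nonempty := by
  obtain ⟨p, hp, f, -, rfl⟩ := hX
  exact ⟨f ⟨0, hp⟩, festoon_mem_image f ⟨0, hp⟩⟩

lemma lo_mem_ival {X : Finset (Link n)} {ℓ : Link n} (hℓ : ℓ ∈ X) :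
    ℓ.lo ∈ festoonIval X := ⟨⟨ℓ, hℓ, le_refl _⟩, ⟨ℓ, hℓ, le_of_lt ℓ.lo_lt_hi⟩⟩

lemma hi_mem_ival {X : Finset (Link n)} {ℓ : Link n} (hℓ : ℓ ∈ X) :
    ℓ.hi ∈ festoonIval X := ⟨⟨ℓ, hℓ, le_of_lt ℓ.lo_lt_hi⟩, ⟨ℓ, hℓ, le_refl _⟩⟩

end FewTangledAux

/-- let `𝒳` be a finite set of pairwise disjoint festoons
with laminar festoon intervals, none of which contains the root unless it is
all of `V`.  If every festoon `X ∈ 𝒳` is tangled with at most `α` festoons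
`Z ∈ 𝒳 \ {X}` with `X ≼ Z`, then `⋃_{X ∈ 𝒳} X` is `4(α+1)`-thin. -/
theorem few_tangled_imply_thin {n : ℕ} (α : ℕ)
    (𝒳 : Finset (Finset (Link (n + 3))))
    (hfest : ∀ X ∈ 𝒳, IsFestoon X)
    (hdisj : ∀ X ∈ 𝒳, ∀ Y ∈ 𝒳, X ≠ Y → Disjoint X Y)
    (hlam : ∀ X ∈ 𝒳, ∀ Y ∈ 𝒳,
      festoonIval X ⊆ festoonIval Y ∨ festoonIval Y ⊆ festoonIval X ∨
        festoonIval X ∩ festoonIval Y = ∅)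
    (hroot : ∀ X ∈ 𝒳, festoonIval X ≠ Set.univ →
      (0 : Fin (n + 3)) ∉ festoonIval X)
    (htangled : ∀ X ∈ 𝒳,
      Set.ncard {Z : Finset (Link (n + 3)) |
        Z ∈ 𝒳 ∧ Z ≠ X ∧ festoonIval X ⊆ festoonIval Z ∧ Tangled X Z} ≤ α) :
    IsThin (4 * (α + 1)) (𝒳.biUnion id) := by
  classical
  -- Finset version of the festoon intervals
  set ivF : Finset (Link (n + 3)) → Finset (Fin (n + 3)) :=
    fun Z => Finset.univ.filter (· ∈ festoonIval Z) with hivF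
  have mem_ivF : ∀ (Z : Finset (Link (n + 3))) (w : Fin (n + 3)),
      w ∈ ivF Z ↔ w ∈ festoonIval Z := by
    intro Z w; simp [hivF]
  -- Each non-univ festoon interval is a 2-cut
  have hcutF : ∀ X ∈ 𝒳, festoonIval X ≠ Set.univ → IsCut (ivF X) := by
    intro X hX hXu
    have hXne : X.Nonempty := festoon_nonempty (hfest X hX)
    have hne1 : (X.image Link.lo).Nonempty := hXne.image _
    have hne2 : (X.image Link.hi).Nonempty := hXne.image _
    set s := (X.image Link.lo).min' hne1 with hs
    set t := (X.image Link.hi).max' hne2 with ht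
    obtain ⟨ℓs, hℓs, hℓseq⟩ := Finset.mem_image.1 ((X.image Link.lo).min'_mem hne1)
    obtain ⟨ℓt, hℓt, hℓteq⟩ := Finset.mem_image.1 ((X.image Link.hi).max'_mem hne2)
    have hmem : ∀ w : Fin (n + 3), w ∈ festoonIval X ↔ s ≤ w ∧ w ≤ t := by
      intro w
      constructor
      · rintro ⟨⟨ℓ, hℓ, h1⟩, ⟨ℓ', hℓ', h2⟩⟩
        exact ⟨le_trans (Finset.min'_le _ _ (Finset.mem_image_of_mem _ hℓ)) h1,
          le_trans h2 (Finset.le_max' _ _ (Finset.mem_image_of_mem _ hℓ'))⟩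
      · rintro ⟨h1, h2⟩
        exact ⟨⟨ℓs, hℓs, by rw [hℓseq]; exact h1⟩, ⟨ℓt, hℓt, by rw [hℓteq]; exact h2⟩⟩
    have hst : s ≤ t := by
      have h2 : ℓs.hi ≤ t := Finset.le_max' _ _ (Finset.mem_image_of_mem _ hℓs)
      have h3 : s = ℓs.lo := hs.trans hℓseq.symm
      rw [h3]; exact le_trans (le_of_lt ℓs.lo_lt_hi) h2
    have hs0 : (0 : Fin (n + 3)) < s := by
      rcases eq_or_lt_of_le (Fin.zero_le s) with h0 | h0
      · exact absurd ((hmem 0).2 ⟨le_of_eq h0.symm, Fin.zero_le t⟩) (hroot X hX hXu)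
      · exact h0
    refine ⟨s, t, hs0, hst, ?_⟩
    ext w
    rw [Finset.mem_Icc]
    exact ⟨fun h => (hmem w).1 ((mem_ivF X w).1 h),
      fun h => (mem_ivF X w).2 ((hmem w).2 h)⟩
  -- Finset-level laminarity of festoon intervals
  have hlamF : ∀ X ∈ 𝒳, ∀ Y ∈ 𝒳,
      ivF X ⊆ ivF Y ∨ ivF Y ⊆ ivF X ∨ Disjoint (ivF X) (ivF Y) := by
    intro X hX Y hY
    rcases hlam X hX Y hY with h | h | h
    · exact Or.inl (fun w hw => (mem_ivF Y w).2 (h ((mem_ivF X w).1 hw)))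
    · exact Or.inr (Or.inl (fun w hw => (mem_ivF X w).2 (h ((mem_ivF Y w).1 hw))))
    · refine Or.inr (Or.inr (Finset.disjoint_left.2 (fun w hw hw' => ?_)))
      have hmm : w ∈ festoonIval X ∩ festoonIval Y :=
        ⟨(mem_ivF X w).1 hw, (mem_ivF Y w).1 hw'⟩
      rw [h] at hmm
      exact hmm
  -- The family of festoon-interval cuts, and a maximal laminar extension
  set ℱ : Finset (Finset (Fin (n + 3))) :=
    (𝒳.filter (fun X => festoonIval X ≠ Set.univ)).image ivF with hℱ
  set cuts : Finset (Finset (Fin (n + 3))) := Finset.univ.filter IsCut with hcutsdef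
  have hℱcuts : ℱ ⊆ cuts := by
    intro F hF
    obtain ⟨X, hX, rfl⟩ := Finset.mem_image.1 hF
    have hX' := Finset.mem_filter.1 hX
    exact Finset.mem_filter.2 ⟨Finset.mem_univ _, hcutF X hX'.1 hX'.2⟩
  have hℱlam : Laminar (↑ℱ : Set (Finset (Fin (n + 3)))) := by
    intro A hA B hB
    obtain ⟨X, hX, rfl⟩ := Finset.mem_image.1 (Finset.mem_coe.1 hA)
    obtain ⟨Y, hY, rfl⟩ := Finset.mem_image.1 (Finset.mem_coe.1 hB)
    exact hlamF X (Finset.mem_filter.1 hX).1 Y (Finset.mem_filter.1 hY).1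
  set famP : Finset (Finset (Finset (Fin (n + 3)))) :=
    Finset.univ.filter
      (fun M => ℱ ⊆ M ∧ M ⊆ cuts ∧ Laminar (↑M : Set (Finset (Fin (n + 3))))) with hfamP
  have hFP : ℱ ∈ famP :=
    Finset.mem_filter.2 ⟨Finset.mem_univ _, Finset.Subset.refl _, hℱcuts, hℱlam⟩
  obtain ⟨𝓜, hMP, h𝓜max⟩ := famP.exists_max_image Finset.card ⟨ℱ, hFP⟩
  obtain ⟨-, hℱ𝓜, h𝓜cuts, h𝓜lam⟩ := Finset.mem_filter.1 hMP
  refine ⟨(↑𝓜 : Set (Finset (Fin (n + 3)))), ⟨?_, h𝓜lam, ?_⟩, ?_⟩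
  · intro C hC
    exact (Finset.mem_filter.1 (h𝓜cuts (Finset.mem_coe.1 hC))).2
  · -- maximality
    intro C hCcut hC hlamins
    have hC' : C ∉ 𝓜 := fun h => hC (Finset.mem_coe.2 h)
    have h𝓜' : insert C 𝓜 ∈ famP := by
      refine Finset.mem_filter.2 ⟨Finset.mem_univ _, ?_, ?_, ?_⟩
      · exact hℱ𝓜.trans (Finset.subset_insert _ _)
      · intro D hD
        rcases Finset.mem_insert.1 hD with rfl | hD
        · exact Finset.mem_filter.2 ⟨Finset.mem_univ _, hCcut⟩
        · exact h𝓜cuts hD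
      · rw [Finset.coe_insert]; exact hlamins
    have hle := h𝓜max _ h𝓜'
    rw [Finset.card_insert_of_notMem hC'] at hle
    omega
  -- the cardinality bound for every member of the family
  intro C hC
  obtain ⟨a, b, ha, hab, rfl⟩ :=
    (Finset.mem_filter.1 (h𝓜cuts (Finset.mem_coe.1 hC))).2
  set TL := 𝒳.filter (fun Z => a ∈ festoonIval Z ∧ ∃ w, w < a ∧ w ∈ festoonIval Z) with hTLdef
  set TR := 𝒳.filter (fun Z => b ∈ festoonIval Z ∧ ∃ w, b < w ∧ w ∈ festoonIval Z) with hTRdef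
  set T := 𝒳.filter (fun Z => (cutLinks Z (Finset.Icc a b)).Nonempty) with hTdef
  have haC : a ∈ Finset.Icc a b := Finset.mem_Icc.2 ⟨le_refl _, hab⟩
  have hbC : b ∈ Finset.Icc a b := Finset.mem_Icc.2 ⟨hab, le_refl _⟩
  have hpattern : ∀ Z ∈ 𝒳, ∀ ζ ∈ cutLinks Z (Finset.Icc a b),
      (ζ.lo ∈ Finset.Icc a b ∧ b < ζ.hi) ∨ (ζ.lo < a ∧ ζ.hi ∈ Finset.Icc a b) := by
    intro Z hZ ζ hζ
    obtain ⟨hζZ, hcr⟩ := Finset.mem_filter.1 hζ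
    rcases hcr with ⟨h1, h2⟩ | ⟨h1, h2⟩
    · left
      refine ⟨h1, ?_⟩
      by_contra hcon
      push_neg at hcon
      exact h2 (Finset.mem_Icc.2
        ⟨le_of_lt (lt_of_le_of_lt (Finset.mem_Icc.1 h1).1 ζ.lo_lt_hi), hcon⟩)
    · right
      refine ⟨?_, h2⟩
      by_contra hcon
      push_neg at hcon
      exact h1 (Finset.mem_Icc.2
        ⟨hcon, le_of_lt (lt_of_lt_of_le ζ.lo_lt_hi (Finset.mem_Icc.1 h2).2)⟩)
  have hTsub : T ⊆ TL ∪ TR := by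
    intro Z hZT
    obtain ⟨hZ𝒳, ζ, hζ⟩ := Finset.mem_filter.1 hZT
    have hζZ := (Finset.mem_filter.1 hζ).1
    rcases hpattern Z hZ𝒳 ζ hζ with ⟨h1, h2⟩ | ⟨h1, h2⟩
    · refine Finset.mem_union_right _ (Finset.mem_filter.2 ⟨hZ𝒳, ?_,
        ⟨ζ.hi, h2, hi_mem_ival hζZ⟩⟩)
      exact ⟨⟨ζ, hζZ, (Finset.mem_Icc.1 h1).2⟩, ⟨ζ, hζZ, le_of_lt h2⟩⟩
    · refine Finset.mem_union_left _ (Finset.mem_filter.2 ⟨hZ𝒳, ?_,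
        ⟨ζ.lo, h1, lo_mem_ival hζZ⟩⟩)
      exact ⟨⟨ζ, hζZ, le_of_lt h1⟩, ⟨ζ, hζZ, (Finset.mem_Icc.1 h2).1⟩⟩
  -- minimal festoon of a nested family
  have minOf : ∀ TS : Finset (Finset (Link (n + 3))),
      (∀ Z ∈ TS, ∀ Z' ∈ TS,
        festoonIval Z ⊆ festoonIval Z' ∨ festoonIval Z' ⊆ festoonIval Z) →
      TS.Nonempty → ∃ M ∈ TS, ∀ Z ∈ TS, festoonIval M ⊆ festoonIval Z := by
    intro TS hnest hne
    obtain ⟨M, hM, hmin⟩ := TS.exists_min_image (fun Z => (ivF Z).card) hne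
    refine ⟨M, hM, fun Z hZ => ?_⟩
    rcases hnest M hM Z hZ with h | h
    · exact h
    · have h1 : ivF Z ⊆ ivF M := fun x hx => (mem_ivF M x).2 (h ((mem_ivF Z x).1 hx))
      have h3 : ivF Z = ivF M := Finset.eq_of_subset_of_card_le h1 (hmin Z hZ)
      intro x hx
      have hx' : x ∈ ivF M := (mem_ivF M x).2 hx
      rw [← h3] at hx'
      exact (mem_ivF Z x).1 hx'
  have hnestedTL : ∀ Z ∈ TL, ∀ Z' ∈ TL,
      festoonIval Z ⊆ festoonIval Z' ∨ festoonIval Z' ⊆ festoonIval Z := by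
    intro Z hZ Z' hZ'
    obtain ⟨hZ𝒳, hZa, -⟩ := Finset.mem_filter.1 hZ
    obtain ⟨hZ'𝒳, hZ'a, -⟩ := Finset.mem_filter.1 hZ'
    rcases hlam Z hZ𝒳 Z' hZ'𝒳 with h | h | h
    · exact Or.inl h
    · exact Or.inr h
    · exfalso
      have hmm : a ∈ festoonIval Z ∩ festoonIval Z' := ⟨hZa, hZ'a⟩
      rw [h] at hmm
      exact hmm
  have hnestedTR : ∀ Z ∈ TR, ∀ Z' ∈ TR,
      festoonIval Z ⊆ festoonIval Z' ∨ festoonIval Z' ⊆ festoonIval Z := by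
    intro Z hZ Z' hZ'
    obtain ⟨hZ𝒳, hZb, -⟩ := Finset.mem_filter.1 hZ
    obtain ⟨hZ'𝒳, hZ'b, -⟩ := Finset.mem_filter.1 hZ'
    rcases hlam Z hZ𝒳 Z' hZ'𝒳 with h | h | h
    · exact Or.inl h
    · exact Or.inr h
    · exfalso
      have hmm : b ∈ festoonIval Z ∩ festoonIval Z' := ⟨hZb, hZ'b⟩
      rw [h] at hmm
      exact hmm
  -- the cut is contained in the interval of any festoon straddling a boundary edge
  have hCsubL : ∀ M ∈ TL, ∀ w ∈ Finset.Icc a b, w ∈ festoonIval M := by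
    intro M hM
    obtain ⟨hM𝒳, hMa, w0, hw0a, hw0⟩ := Finset.mem_filter.1 hM
    by_cases hu : festoonIval M = Set.univ
    · intro w _; rw [hu]; exact Set.mem_univ w
    have hFmem : ivF M ∈ 𝓜 :=
      hℱ𝓜 (Finset.mem_image_of_mem ivF (Finset.mem_filter.2 ⟨hM𝒳, hu⟩))
    rcases h𝓜lam (Finset.Icc a b) hC (ivF M) (Finset.mem_coe.2 hFmem) with h | h | h
    · intro w hw; exact (mem_ivF M w).1 (h hw)
    · exfalso
      have hw0C := h ((mem_ivF M w0).2 hw0)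
      exact absurd (Finset.mem_Icc.1 hw0C).1 (not_le.mpr hw0a)
    · exact absurd ((mem_ivF M a).2 hMa) (Finset.disjoint_left.1 h haC)
  have hCsubR : ∀ M ∈ TR, ∀ w ∈ Finset.Icc a b, w ∈ festoonIval M := by
    intro M hM
    obtain ⟨hM𝒳, hMb, w0, hw0b, hw0⟩ := Finset.mem_filter.1 hM
    by_cases hu : festoonIval M = Set.univ
    · intro w _; rw [hu]; exact Set.mem_univ w
    have hFmem : ivF M ∈ 𝓜 :=
      hℱ𝓜 (Finset.mem_image_of_mem ivF (Finset.mem_filter.2 ⟨hM𝒳, hu⟩))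
    rcases h𝓜lam (Finset.Icc a b) hC (ivF M) (Finset.mem_coe.2 hFmem) with h | h | h
    · intro w hw; exact (mem_ivF M w).1 (h hw)
    · exfalso
      have hw0C := h ((mem_ivF M w0).2 hw0)
      exact absurd (Finset.mem_Icc.1 hw0C).2 (not_le.mpr hw0b)
    · exact absurd ((mem_ivF M b).2 hMb) (Finset.disjoint_left.1 h hbC)
  -- at most α + 1 festoons contribute crossing links
  have hTcard : T.card ≤ α + 1 := by
    rcases T.eq_empty_or_nonempty with hTe | hTne
    · rw [hTe, Finset.card_empty]; omega
    obtain ⟨Z0, hZ0⟩ := hTne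
    have hZ0' := hTsub hZ0
    have hX : ∃ X ∈ 𝒳, (∀ w ∈ Finset.Icc a b, w ∈ festoonIval X) ∧
        ∀ Z ∈ TL ∪ TR, festoonIval X ⊆ festoonIval Z := by
      rcases TL.eq_empty_or_nonempty with hTLe | hTLne
      · rcases TR.eq_empty_or_nonempty with hTRe | hTRne
        · rw [hTLe, hTRe] at hZ0'; simp at hZ0'
        · obtain ⟨MR, hMR, hminR⟩ := minOf TR hnestedTR hTRne
          refine ⟨MR, (Finset.mem_filter.1 hMR).1, hCsubR MR hMR, fun Z hZ => ?_⟩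
          rcases Finset.mem_union.1 hZ with hZ | hZ
          · rw [hTLe] at hZ; simp at hZ
          · exact hminR Z hZ
      · obtain ⟨ML, hML, hminL⟩ := minOf TL hnestedTL hTLne
        rcases TR.eq_empty_or_nonempty with hTRe | hTRne
        · refine ⟨ML, (Finset.mem_filter.1 hML).1, hCsubL ML hML, fun Z hZ => ?_⟩
          rcases Finset.mem_union.1 hZ with hZ | hZ
          · exact hminL Z hZ
          · rw [hTRe] at hZ; simp at hZ
        · obtain ⟨MR, hMR, hminR⟩ := minOf TR hnestedTR hTRne
          have haML : a ∈ festoonIval ML := hCsubL ML hML a haC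
          have haMR : a ∈ festoonIval MR := hCsubR MR hMR a haC
          rcases hlam ML (Finset.mem_filter.1 hML).1 MR (Finset.mem_filter.1 hMR).1
            with h | h | h
          · refine ⟨ML, (Finset.mem_filter.1 hML).1, hCsubL ML hML, fun Z hZ => ?_⟩
            rcases Finset.mem_union.1 hZ with hZ | hZ
            · exact hminL Z hZ
            · exact h.trans (hminR Z hZ)
          · refine ⟨MR, (Finset.mem_filter.1 hMR).1, hCsubR MR hMR, fun Z hZ => ?_⟩
            rcases Finset.mem_union.1 hZ with hZ | hZ
            · exact h.trans (hminL Z hZ)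
            · exact hminR Z hZ
          · exfalso
            have hmm : a ∈ festoonIval ML ∩ festoonIval MR := ⟨haML, haMR⟩
            rw [h] at hmm
            exact hmm
    obtain ⟨X, hX𝒳, hCX, hXZ⟩ := hX
    have herase : ∀ Z ∈ T.erase X, Z ∈ {Z : Finset (Link (n + 3)) |
        Z ∈ 𝒳 ∧ Z ≠ X ∧ festoonIval X ⊆ festoonIval Z ∧ Tangled X Z} := by
      intro Z hZ
      obtain ⟨hZne, hZT⟩ := Finset.mem_erase.1 hZ
      obtain ⟨hZ𝒳, ζ, hζ⟩ := Finset.mem_filter.1 hZT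
      have hζZ := (Finset.mem_filter.1 hζ).1
      have hXsubZ : festoonIval X ⊆ festoonIval Z := hXZ Z (hTsub hZT)
      refine ⟨hZ𝒳, hZne, hXsubZ, ?_⟩
      rcases hpattern Z hZ𝒳 ζ hζ with ⟨h1, h2⟩ | ⟨h1, h2⟩
      · exact festoon_tangle (hfest X hX𝒳) (hfest Z hZ𝒳) hXsubZ hζZ (Or.inl rfl)
          (hCX ζ.lo h1)
      · exact festoon_tangle (hfest X hX𝒳) (hfest Z hZ𝒳) hXsubZ hζZ (Or.inr rfl)
          (hCX ζ.hi h2)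
    have hca : (T.erase X).card ≤ α := by
      have h1 : ((T.erase X : Finset _) : Set (Finset (Link (n + 3)))) ⊆
          {Z | Z ∈ 𝒳 ∧ Z ≠ X ∧ festoonIval X ⊆ festoonIval Z ∧ Tangled X Z} :=
        fun Z hZ => herase Z (Finset.mem_coe.1 hZ)
      have h2 : {Z : Finset (Link (n + 3)) |
          Z ∈ 𝒳 ∧ Z ≠ X ∧ festoonIval X ⊆ festoonIval Z ∧ Tangled X Z}.Finite :=
        Set.Finite.subset 𝒳.finite_toSet (fun Z hZ => hZ.1)
      calc (T.erase X).card
          = ((T.erase X : Finset _) : Set (Finset (Link (n + 3)))).ncard :=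
            (Set.ncard_coe_finset _).symm
        _ ≤ _ := Set.ncard_le_ncard h1 h2
        _ ≤ α := htangled X hX𝒳
    have hins : T ⊆ insert X (T.erase X) := by
      intro z hz
      by_cases hzX : z = X
      · exact Finset.mem_insert.2 (Or.inl hzX)
      · exact Finset.mem_insert.2 (Or.inr (Finset.mem_erase.2 ⟨hzX, hz⟩))
    have hc1 : T.card ≤ (T.erase X).card + 1 :=
      le_trans (Finset.card_le_card hins) (Finset.card_insert_le _ _)
    omega
  -- put everything together
  have hsplitK : cutLinks (𝒳.biUnion id) (Finset.Icc a b) =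
      𝒳.biUnion (fun Z => cutLinks (id Z) (Finset.Icc a b)) := by
    unfold cutLinks
    exact Finset.filter_biUnion 𝒳 id _
  rw [hsplitK]
  refine le_trans Finset.card_biUnion_le ?_
  have hzero : ∀ Z ∈ 𝒳, Z ∉ T → (cutLinks (id Z) (Finset.Icc a b)).card = 0 := by
    intro Z hZ hZT
    have hne : ¬(cutLinks Z (Finset.Icc a b)).Nonempty :=
      fun h => hZT (Finset.mem_filter.2 ⟨hZ, h⟩)
    rw [Finset.not_nonempty_iff_eq_empty] at hne
    simp [id_eq, hne]
  have hsum : ∑ Z ∈ 𝒳, (cutLinks (id Z) (Finset.Icc a b)).card =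
      ∑ Z ∈ T, (cutLinks (id Z) (Finset.Icc a b)).card :=
    (Finset.sum_subset (Finset.filter_subset _ _) hzero).symm
  rw [hsum]
  have hbound : ∑ Z ∈ T, (cutLinks (id Z) (Finset.Icc a b)).card ≤ T.card * 4 := by
    calc ∑ Z ∈ T, (cutLinks (id Z) (Finset.Icc a b)).card ≤ ∑ _Z ∈ T, 4 :=
        Finset.sum_le_sum (fun Z hZ =>
          festoon_four (hfest Z (Finset.mem_filter.1 hZ).1) a b)
      _ = T.card * 4 := by rw [Finset.sum_const, smul_eq_mul]
  omega
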